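/- As p → ∞, Z(p+1) ~ t·12^p·p^{-5/2} where t = √3/(8√π). -/

import Mathlib

open Asymptotics Filter Topology

/-- `Z(1) = (2-√3)/4` and `Z(p) = 6^p·(2p-5)!!/(8√3·p!)` for `p ≥ 2`. -/
noncomputable def Zfun : ℕ → ℝ := fun p =>
  if p = 1 then (2 - Real.sqrt 3) / 4
  else 6 ^ p * Nat.doubleFactorial (2 * p - 5) / (8 * Real.sqrt 3 * Nat.factorial p)

lemma stirling_pos {n : ℕ} (hn : n ≠ 0) : 0 < Stirling.stirlingSeq n := by
  have h : (0:ℝ) < n := by exact_mod_cast Nat.pos_of_ne_zero hn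
  have : (0:ℝ) < n.factorial := by exact_mod_cast n.factorial_pos
  unfold Stirling.stirlingSeq
  positivity

lemma fact_eq {n : ℕ} (hn : n ≠ 0) :
    (n.factorial : ℝ) = Stirling.stirlingSeq n *
      (Real.sqrt (2 * n) * ((n : ℝ) / Real.exp 1) ^ n) := by
  have h : (0:ℝ) < n := by exact_mod_cast Nat.pos_of_ne_zero hn
  have hne : Real.sqrt (2 * n) * ((n : ℝ) / Real.exp 1) ^ n ≠ 0 := by positivity
  rw [Stirling.stirlingSeq, div_mul_cancel₀ _ hne]

lemma df_eq (q : ℕ) : ((2*q+1).doubleFactorial : ℝ) =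
    ((2*q+2).factorial : ℝ) / (2^(q+1) * ((q+1).factorial : ℝ)) := by
  have key : (2*q+2).factorial = 2^(q+1) * (q+1).factorial * (2*q+1).doubleFactorial := by
    have h1 : (2*q+2).factorial = (2*q+2).doubleFactorial * (2*q+1).doubleFactorial := by
      have := Nat.factorial_eq_mul_doubleFactorial (2*q+1)
      simpa using this
    have h2 : (2*(q+1)).doubleFactorial = 2^(q+1) * (q+1).factorial :=
      Nat.doubleFactorial_two_mul (q+1)
    rw [h1, show 2*q+2 = 2*(q+1) by ring, h2]
  have h2pos : (0:ℝ) < 2^(q+1) * ((q+1).factorial : ℝ) := by positivity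
  rw [eq_div_iff h2pos.ne']
  push_cast [key]
  ring

lemma rpow_neg_five_half {x : ℝ} (hx : 0 < x) :
    x ^ (-(5/2) : ℝ) = (x^2 * Real.sqrt x)⁻¹ := by
  rw [Real.rpow_neg hx.le]
  congr 1
  rw [show (5/2 : ℝ) = (2:ℕ) + (1/2 : ℝ) by norm_num, Real.rpow_add hx,
    Real.rpow_natCast, Real.sqrt_eq_rpow]

lemma sq_cancel {a b : ℝ} (ha : 0 ≤ a) (hb : 0 ≤ b) (h : a ^ 2 = b ^ 2) : a = b := by
  rw [← Real.sqrt_sq ha, h, Real.sqrt_sq hb]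

lemma ratio_eq (q : ℕ) :
    Zfun (q+3) / (Real.sqrt 3 / (8 * Real.sqrt Real.pi) * 12^(q+2) *
        ((q:ℝ)+2) ^ (-(5/2) : ℝ))
    = Real.sqrt Real.pi * Stirling.stirlingSeq (2*q+2)
        / (Stirling.stirlingSeq (q+1) * Stirling.stirlingSeq (q+3))
      * (Real.exp 2 * (((q:ℝ)+1)/((q:ℝ)+3))^(q+3))
      * (((q:ℝ)+2)/((q:ℝ)+1))^2
      * Real.sqrt (((q:ℝ)+2)/((q:ℝ)+3)) := by
  have h1 : (0:ℝ) < (q:ℝ)+1 := by positivity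
  have h2 : (0:ℝ) < (q:ℝ)+2 := by positivity
  have h3 : (0:ℝ) < (q:ℝ)+3 := by positivity
  have hspi : Real.sqrt Real.pi ≠ 0 := by
    have := Real.pi_pos; positivity
  have hpi : Real.pi ≠ 0 := Real.pi_ne_zero
  have hexp : Real.exp 1 ≠ 0 := Real.exp_ne_zero 1
  have hP1 := stirling_pos (n := q+1) (by omega)
  have hP2 := stirling_pos (n := 2*q+2) (by omega)
  have hP3 := stirling_pos (n := q+3) (by omega)
  have hS1 : Stirling.stirlingSeq (q+1) ≠ 0 := hP1.ne'
  have hS2 : Stirling.stirlingSeq (2*q+2) ≠ 0 := hP2.ne'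
  have hS3 : Stirling.stirlingSeq (q+3) ≠ 0 := hP3.ne'
  have hZ : Zfun (q+3) = 6^(q+3) * ((2*q+1).doubleFactorial : ℝ) /
      (8 * Real.sqrt 3 * ((q+3).factorial : ℝ)) := by
    simp only [Zfun]
    rw [if_neg (by omega), show 2*(q+3)-5 = 2*q+1 by omega]
  rw [hZ]
  refine sq_cancel (by positivity) ?_ ?_
  · refine mul_nonneg (mul_nonneg (mul_nonneg ?_ ?_) ?_) (Real.sqrt_nonneg _)
    · exact div_nonneg (mul_nonneg (Real.sqrt_nonneg _) hP2.le) (mul_nonneg hP1.le hP3.le)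
    · exact mul_nonneg (Real.exp_pos 2).le (pow_nonneg (div_nonneg h1.le h3.le) _)
    · positivity
  · rw [df_eq q, fact_eq (n := q+1) (by omega), fact_eq (n := 2*q+2) (by omega),
      fact_eq (n := q+3) (by omega), rpow_neg_five_half h2,
      show Real.exp 2 = Real.exp 1 ^ 2 by rw [Real.exp_one_pow]; norm_num]
    push_cast
    rw [show (2*(q:ℝ)+2) = 2*((q:ℝ)+1) by ring]
    set E := Real.exp 1 with hE
    rw [show (6:ℝ)^(q+3) = 2^(q+3)*3^(q+3) by
          rw [show (6:ℝ) = 2*3 by norm_num, mul_pow],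
        show (12:ℝ)^(q+2) = 2^(q+2)*(2^(q+2)*3^(q+2)) by rw [← mul_pow, ← mul_pow]; norm_num]
    simp only [mul_pow, div_pow, inv_pow]
    rw [Real.sq_sqrt (by norm_num : (0:ℝ) ≤ 3),
        Real.sq_sqrt (by positivity : (0:ℝ) ≤ Real.pi),
        Real.sq_sqrt (by positivity : (0:ℝ) ≤ 2*(2*((q:ℝ)+1))),
        Real.sq_sqrt (by positivity : (0:ℝ) ≤ 2*((q:ℝ)+1)),
        Real.sq_sqrt (by positivity : (0:ℝ) ≤ 2*((q:ℝ)+3)),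
        Real.sq_sqrt h2.le,
        Real.sq_sqrt (by positivity : (0:ℝ) ≤ ((q:ℝ)+2)/((q:ℝ)+3))]
    field_simp
    ring

lemma aux_tendsto (a b : ℝ) (hb : 0 < b) :
    Tendsto (fun q : ℕ => ((q:ℝ)+a)/((q:ℝ)+b)) atTop (𝓝 1) := by
  have hb' : Tendsto (fun q : ℕ => (q:ℝ)+b) atTop atTop :=
    tendsto_atTop_add_const_right _ b tendsto_natCast_atTop_atTop
  have h0 : Tendsto (fun q : ℕ => ((q:ℝ)+b)⁻¹) atTop (𝓝 0) := hb'.inv_tendsto_atTop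
  have h2 : Tendsto (fun q : ℕ => 1 + (a-b)*((q:ℝ)+b)⁻¹) atTop (𝓝 (1 + (a-b)*0)) :=
    tendsto_const_nhds.add (h0.const_mul _)
  rw [mul_zero, add_zero] at h2
  refine h2.congr fun q => ?_
  have : (q:ℝ)+b ≠ 0 := by positivity
  field_simp
  ring

/-- As `p → ∞`, `Z(p+1) ~ t·12^p·p^{-5/2}` with `t = √3/(8√π)`. -/
theorem Z_asymptotic :
    (fun p : ℕ => Zfun (p + 1)) ~[atTop]
      (fun p : ℕ =>
        Real.sqrt 3 / (8 * Real.sqrt Real.pi) * 12 ^ p * (p : ℝ) ^ (-(5 / 2) : ℝ)) := by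
  have hpi := Real.pi_pos
  refine Asymptotics.isEquivalent_of_tendsto_one ?_
  · rw [← tendsto_add_atTop_iff_nat 2]
    have hlim : Tendsto (fun q : ℕ =>
        Real.sqrt Real.pi * Stirling.stirlingSeq (2*q+2)
          / (Stirling.stirlingSeq (q+1) * Stirling.stirlingSeq (q+3))
        * (Real.exp 2 * (((q:ℝ)+1)/((q:ℝ)+3))^(q+3))
        * (((q:ℝ)+2)/((q:ℝ)+1))^2
        * Real.sqrt (((q:ℝ)+2)/((q:ℝ)+3))) atTop (𝓝 1) := by
      have hspi : Real.sqrt Real.pi ≠ 0 := by positivity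
      have hS : Tendsto Stirling.stirlingSeq atTop (𝓝 (Real.sqrt Real.pi)) :=
        Stirling.tendsto_stirlingSeq_sqrt_pi
      have t1 : Tendsto (fun q : ℕ => Real.sqrt Real.pi * Stirling.stirlingSeq (2*q+2)
          / (Stirling.stirlingSeq (q+1) * Stirling.stirlingSeq (q+3))) atTop
          (𝓝 (Real.sqrt Real.pi * Real.sqrt Real.pi /
            (Real.sqrt Real.pi * Real.sqrt Real.pi))) := by
        refine Tendsto.div (tendsto_const_nhds.mul (hS.comp ?_)) ((hS.comp ?_).mul (hS.comp ?_))
          (by positivity)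
        · exact tendsto_atTop_mono (fun q => by simp only [id_eq]; omega) tendsto_id
        · exact tendsto_atTop_mono (fun q => by simp only [id_eq]; omega) tendsto_id
        · exact tendsto_atTop_mono (fun q => by simp only [id_eq]; omega) tendsto_id
      have t2 : Tendsto (fun q : ℕ => Real.exp 2 * (((q:ℝ)+1)/((q:ℝ)+3))^(q+3)) atTop
          (𝓝 (Real.exp 2 * Real.exp (-2))) := by
        refine tendsto_const_nhds.mul ?_
        have hcomp : Tendsto (fun q : ℕ => (1 + (-2) / ((q+3 : ℕ) : ℝ)) ^ (q+3)) atTop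
            (𝓝 (Real.exp (-2))) :=
          (Real.tendsto_one_add_div_pow_exp (-2)).comp
            (tendsto_atTop_mono (fun q => by simp only [id_eq]; omega) tendsto_id)
        refine hcomp.congr fun q => ?_
        have h3 : ((q:ℝ)+3) ≠ 0 := by positivity
        push_cast
        congr 1
        field_simp
        ring
      have t3 : Tendsto (fun q : ℕ => (((q:ℝ)+2)/((q:ℝ)+1))^2) atTop (𝓝 1) := by
        have := (aux_tendsto 2 1 one_pos).pow 2
        simpa using this
      have t4 : Tendsto (fun q : ℕ => Real.sqrt (((q:ℝ)+2)/((q:ℝ)+3))) atTop (𝓝 1) := by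
        have := (aux_tendsto 2 3 (by norm_num)).sqrt
        simpa using this
      have := ((t1.mul t2).mul t3).mul t4
      have heq : Real.sqrt Real.pi * Real.sqrt Real.pi /
            (Real.sqrt Real.pi * Real.sqrt Real.pi) * (Real.exp 2 * Real.exp (-2)) * 1 * 1
          = 1 := by
        rw [div_self (by positivity), ← Real.exp_add]
        norm_num
      rwa [heq] at this
    refine hlim.congr fun q => ?_
    have h := ratio_eq q
    simp only [Pi.div_apply]
    rw [show q+2+1 = q+3 by omega]
    push_cast at h ⊢
    linarith [h]
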